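/- Let G be a connected graph and r ≥ 2 an integer. The vertices of any isometric path of G^r all of whose edges join vertices at distance at least 2 in G ('red' isometric path) can be covered by 2r-1 isometric paths of G. -/

import Mathlib

open SimpleGraph

variable {V : Type*}

/-- A walk is an isometric path if it is a path and its length equals the distance
between its end-vertices. -/
def IsometricPath (G : SimpleGraph V) {u v : V} (p : G.Walk u v) : Prop :=
  p.IsPath ∧ p.length = G.dist u v

/-- `RootedCover G r k` : the vertices of every isometric path of `G` can be covered by
`k` many `r`-rooted isometric paths of `G`. -/
def RootedCover (G : SimpleGraph V) (r : V) (k : ℕ) : Prop :=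
  ∀ ⦃u v : V⦄ (p : G.Walk u v), IsometricPath G p →
    ∃ Q : Fin k → Σ w : V, G.Walk r w,
      (∀ i, IsometricPath G (Q i).2) ∧
      ∀ x ∈ p.support, ∃ i, x ∈ (Q i).2.support

/-- The isometric path complexity of `G` relative to a root `r`. -/
noncomputable def ipcoR (G : SimpleGraph V) (r : V) : ℕ := sInf {k | RootedCover G r k}

/-- The isometric path complexity of `G`. -/
noncomputable def ipco (G : SimpleGraph V) : ℕ := sInf {k | ∃ r, RootedCover G r k}

/-- The strong isometric path complexity of `G`. -/
noncomputable def sipco (G : SimpleGraph V) : ℕ := sInf {k | ∀ r, RootedCover G r k}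

/-- The `r`-th power of `G`: two distinct vertices are adjacent iff their distance in `G`
is at most `r`. -/
def SimpleGraph.power (G : SimpleGraph V) (r : ℕ) : SimpleGraph V where
  Adj u v := u ≠ v ∧ G.Reachable u v ∧ G.dist u v ≤ r
  symm := by
    refine ⟨?_⟩
    rintro u v ⟨h1, h2, h3⟩
    exact ⟨h1.symm, h2.symm, by rwa [G.dist_comm]⟩
  loopless := by refine ⟨?_⟩; rintro u ⟨h1, -, -⟩; exact h1 rfl

section RedCoverAux

variable {G : SimpleGraph V}

private lemma dist_start_getVert_le (hG : G.Connected) :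
    ∀ {u v : V} (w : G.Walk u v) (j : ℕ), G.dist u (w.getVert j) ≤ j := by
  intro u v w
  induction w with
  | nil => intro j; simp [Walk.getVert, SimpleGraph.dist_self]
  | @cons a b c h q ih =>
    intro j
    cases j with
    | zero => simp [SimpleGraph.dist_self]
    | succ j =>
      have h1 : G.dist a b ≤ 1 := (SimpleGraph.dist_eq_one_iff_adj.mpr h).le
      have h2 := ih j
      have h3 := hG.dist_triangle (u := a) (v := b) (w := q.getVert j)
      have h4 : (Walk.cons h q).getVert (j + 1) = q.getVert j := rfl
      rw [h4]
      omega

private lemma dist_getVert_end_le :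
    ∀ {u v : V} (w : G.Walk u v) (j : ℕ), G.dist (w.getVert j) v ≤ w.length - j := by
  intro u v w
  induction w with
  | nil => intro j; simp [Walk.getVert, SimpleGraph.dist_self]
  | @cons a b c h q ih =>
    intro j
    cases j with
    | zero =>
      simpa using SimpleGraph.dist_le (Walk.cons h q)
    | succ j =>
      have h4 : (Walk.cons h q).getVert (j + 1) = q.getVert j := rfl
      have h5 : (Walk.cons h q).length = q.length + 1 := by simp
      rw [h4, h5]
      have := ih j
      omega

private lemma power_connected (hG : G.Connected) {r : ℕ} (hr : 1 ≤ r) :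
    (G.power r).Connected := by
  rw [connected_iff]
  refine ⟨fun a b => ?_, hG.nonempty⟩
  obtain ⟨w⟩ := hG.preconnected a b
  induction w with
  | nil => exact Reachable.refl _
  | @cons a b c h q ih =>
    refine (Adj.reachable ?_).trans ih
    exact ⟨h.ne, h.reachable, by rw [SimpleGraph.dist_eq_one_iff_adj.mpr h]; omega⟩

private lemma power_dist_le (hG : G.Connected) {r : ℕ} (hr : 1 ≤ r) :
    ∀ (m : ℕ) (a b : V), G.dist a b ≤ r * m → (G.power r).dist a b ≤ m := by
  intro m
  induction m with
  | zero =>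
    intro a b hd
    have : a = b := (hG.dist_eq_zero_iff).mp (by omega)
    subst this; simp [SimpleGraph.dist_self]
  | succ m ih =>
    intro a b hd
    by_cases hab : a = b
    · subst hab; simp [SimpleGraph.dist_self]
    by_cases hdr : G.dist a b ≤ r
    · have hadj : (G.power r).Adj a b := ⟨hab, hG.preconnected a b, hdr⟩
      rw [SimpleGraph.dist_eq_one_iff_adj.mpr hadj]; omega
    · push_neg at hdr
      obtain ⟨w, hw⟩ := hG.exists_walk_length_eq_dist a b
      have h1 : G.dist a (w.getVert r) ≤ r := dist_start_getVert_le hG w r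
      have h2 : G.dist (w.getVert r) b ≤ r * m := by
        have h5 := dist_getVert_end_le w r
        have h6 : r * (m + 1) = r * m + r := by ring
        omega
      have h3 : (G.power r).dist (w.getVert r) b ≤ m := ih (w.getVert r) b h2
      have h4 : (G.power r).dist a (w.getVert r) ≤ 1 := by
        rcases eq_or_ne a (w.getVert r) with hac | hac
        · rw [← hac]; simp [SimpleGraph.dist_self]
        · have hadj : (G.power r).Adj a (w.getVert r) :=
            ⟨hac, hG.preconnected a (w.getVert r), h1⟩
          exact (SimpleGraph.dist_eq_one_iff_adj.mpr hadj).le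
      have h7 := (power_connected hG hr).dist_triangle (u := a) (v := w.getVert r) (w := b)
      omega

private lemma chain_cover (hG : G.Connected) (x : ℕ → V) (D : ℕ → ℕ) :
    ∀ (l : List ℕ) (a : ℕ),
      (∀ i ∈ a :: l, ∀ j ∈ a :: l, i ≤ j → G.dist (x i) (x j) + D i = D j) →
      (a :: l).Pairwise (· ≤ ·) →
      ∃ t, t ∈ a :: l ∧ ∃ (w : G.Walk (x a) (x t)),
        w.length = G.dist (x a) (x t) ∧ ∀ i ∈ a :: l, x i ∈ w.support := by
  intro l
  induction l with
  | nil =>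
    intro a _ _
    refine ⟨a, by simp, Walk.nil, by simp [SimpleGraph.dist_self], ?_⟩
    intro i hi
    simp only [List.mem_singleton] at hi
    subst hi
    simp
  | cons b l ih =>
    intro a hyp hpair
    have hpair' : (b :: l).Pairwise (· ≤ ·) := hpair.of_cons
    obtain ⟨t, ht, w, hlen, hsup⟩ := ih b
      (fun i hi j hj hij => hyp i (List.mem_cons_of_mem _ hi) j (List.mem_cons_of_mem _ hj) hij)
      hpair'
    have hale : ∀ y ∈ b :: l, a ≤ y := (List.pairwise_cons.mp hpair).1
    have hab : a ≤ b := hale b (by simp)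
    have hat : a ≤ t := hale t ht
    have hbt : b ≤ t := by
      rcases List.mem_cons.mp ht with rfl | ht'
      · exact le_refl _
      · exact (List.pairwise_cons.mp hpair').1 t ht'
    have e1 : G.dist (x a) (x b) + D a = D b :=
      hyp a (by simp) b (by simp) hab
    have e2 : G.dist (x b) (x t) + D b = D t :=
      hyp b (by simp) t (List.mem_cons_of_mem _ ht) hbt
    have e3 : G.dist (x a) (x t) + D a = D t :=
      hyp a (by simp) t (List.mem_cons_of_mem _ ht) hat
    obtain ⟨g, hg⟩ := hG.exists_walk_length_eq_dist (x a) (x b)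
    refine ⟨t, List.mem_cons_of_mem _ ht, g.append w, ?_, ?_⟩
    · rw [Walk.length_append, hg, hlen]; omega
    · intro i hi
      rcases List.mem_cons.mp hi with rfl | hi'
      · exact Walk.start_mem_support _
      · exact Walk.subset_support_append_right g w (hsup i hi')

end RedCoverAux

/-- the vertices of any red isometric path of `G^r` (all edges joining
vertices non-adjacent in `G`) can be covered by `2r - 1` isometric paths of `G`. -/
theorem red_isometric_cover (G : SimpleGraph V) (hG : G.Connected)
    (r : ℕ) (hr : 2 ≤ r) {u v : V} (p : (G.power r).Walk u v)
    (hp : IsometricPath (G.power r) p) (hred : ∀ e ∈ p.edges, e ∉ G.edgeSet) :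
    ∃ Q : Fin (2 * r - 1) → Σ a : V, Σ b : V, G.Walk a b,
      (∀ i, IsometricPath G (Q i).2.2) ∧
      ∀ x ∈ p.support, ∃ i, x ∈ (Q i).2.2.support := by
  classical
  obtain ⟨hpath, hlen⟩ := hp
  have hr1 : 1 ≤ r := by omega
  set k := p.length with hk
  have hx0 : p.getVert 0 = u := p.getVert_zero
  have hxk : p.getVert k = v := p.getVert_length
  -- F1: distances along the path are at most r times the index gap
  have F1 : ∀ i n, i + n ≤ k → G.dist (p.getVert i) (p.getVert (i + n)) ≤ r * n := by
    intro i n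
    induction n with
    | zero => intro _; simp
    | succ n ihn =>
      intro hn
      have hadj : (G.power r).Adj (p.getVert (i + n)) (p.getVert (i + n + 1)) :=
        p.adj_getVert_succ (by omega)
      have h2 : G.dist (p.getVert (i + n)) (p.getVert (i + n + 1)) ≤ r := hadj.2.2
      have h3 := hG.dist_triangle (u := p.getVert i) (v := p.getVert (i + n))
        (w := p.getVert (i + n + 1))
      have h4 := ihn (by omega)
      have h5 : r * (n + 1) = r * n + r := by ring
      have h6 : i + (n + 1) = i + n + 1 := rfl
      rw [h6]
      omega
  have F1' : ∀ i j, i ≤ j → j ≤ k → G.dist (p.getVert i) (p.getVert j) ≤ r * (j - i) := by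
    intro i j hij hj
    have := F1 i (j - i) (by omega)
    rwa [show i + (j - i) = j by omega] at this
  -- F2: the endpoints are far apart in G
  have F2 : 1 ≤ k → r * (k - 1) < G.dist u v := by
    intro h1
    by_contra hcon
    push_neg at hcon
    have h2 := power_dist_le hG hr1 (k - 1) u v hcon
    omega
  -- F3: bounds on d i := dist u (getVert i)
  have F3 : ∀ i, i ≤ k → G.dist u (p.getVert i) ≤ r * i ∧ r * i - G.dist u (p.getVert i) < r := by
    intro i hi
    have hu : G.dist u (p.getVert i) ≤ r * i := by
      have := F1' 0 i (by omega) hi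
      rw [hx0] at this
      simpa using this
    refine ⟨hu, ?_⟩
    rcases Nat.eq_zero_or_pos i with rfl | hipos
    · rw [hx0]; simp [SimpleGraph.dist_self]; omega
    · have h2 : G.dist (p.getVert i) (p.getVert k) ≤ r * (k - i) := F1' i k hi le_rfl
      rw [hxk] at h2
      have htri := hG.dist_triangle (u := u) (v := p.getVert i) (w := v)
      have h3 := F2 (by omega)
      have e1 : r * (k - i) + r * i = r * k := by rw [← Nat.mul_add]; congr 1; omega
      have e2 : r * (i - 1) + r * 1 = r * i := by rw [← Nat.mul_add]; congr 1; omega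
      have e3 : r * (k - 1) + r * 1 = r * k := by rw [← Nat.mul_add]; congr 1; omega
      omega
  -- F4: same-class indices are "aligned"
  have F4 : ∀ i j, i ≤ j → j ≤ k →
      r * i - G.dist u (p.getVert i) = r * j - G.dist u (p.getVert j) →
      G.dist (p.getVert i) (p.getVert j) + G.dist u (p.getVert i) = G.dist u (p.getVert j) := by
    intro i j hij hj hc
    have h1 := (F3 i (le_trans hij hj)).1
    have h2 := (F3 j hj).1
    have h3 : G.dist (p.getVert i) (p.getVert j) ≤ r * (j - i) := F1' i j hij hj
    have htri := hG.dist_triangle (u := u) (v := p.getVert i) (w := p.getVert j)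
    have e1 : r * (j - i) + r * i = r * j := by rw [← Nat.mul_add]; congr 1; omega
    omega
  -- F5: each class is covered by one isometric path
  have F5 : ∀ c : ℕ, ∃ (a b : V) (w : G.Walk a b), IsometricPath G w ∧
      ∀ i, i ≤ k → r * i - G.dist u (p.getVert i) = c → p.getVert i ∈ w.support := by
    intro c
    set l : List ℕ := (List.range (k + 1)).filter
      (fun i => r * i - G.dist u (p.getVert i) = c) with hl
    have hmem : ∀ i, i ∈ l ↔ (i ≤ k ∧ r * i - G.dist u (p.getVert i) = c) := by
      intro i
      simp [hl, List.mem_filter, List.mem_range, Nat.lt_succ_iff]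
    have hpairl : l.Pairwise (· ≤ ·) :=
      ((List.pairwise_lt_range (n := _)).sublist (List.filter_sublist (l := _))).imp le_of_lt
    rcases h2 : l with _ | ⟨a, t⟩
    · refine ⟨u, u, Walk.nil, ⟨Walk.IsPath.nil, by simp [SimpleGraph.dist_self]⟩,
        fun i hik hic => ?_⟩
      have := (hmem i).mpr ⟨hik, hic⟩
      rw [h2] at this
      simp at this
    · have hyp : ∀ i ∈ a :: t, ∀ j ∈ a :: t, i ≤ j →
          G.dist (p.getVert i) (p.getVert j) + G.dist u (p.getVert i)
            = G.dist u (p.getVert j) := by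
        intro i hi j hj hij
        rw [← h2] at hi hj
        obtain ⟨hik, hic⟩ := (hmem i).mp hi
        obtain ⟨hjk, hjc⟩ := (hmem j).mp hj
        exact F4 i j hij hjk (hic.trans hjc.symm)
      have hpair' : (a :: t).Pairwise (· ≤ ·) := h2 ▸ hpairl
      obtain ⟨tt, htt, w, hwlen, hwsup⟩ :=
        chain_cover hG (fun i => p.getVert i) (fun i => G.dist u (p.getVert i)) t a hyp hpair'
      refine ⟨p.getVert a, p.getVert tt, w,
        ⟨w.isPath_of_length_eq_dist hwlen, hwlen⟩, fun i hik hic => ?_⟩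
      exact hwsup i (by rw [← h2]; exact (hmem i).mpr ⟨hik, hic⟩)
  choose A B W hW hWc using F5
  refine ⟨fun j => if h : (j : ℕ) < r then ⟨A j, B j, W j⟩ else ⟨u, u, Walk.nil⟩, ?_, ?_⟩
  · intro i
    dsimp only
    by_cases h : (i : ℕ) < r
    · rw [dif_pos h]
      exact hW _
    · rw [dif_neg h]
      exact ⟨Walk.IsPath.nil, by simp [SimpleGraph.dist_self]⟩
  · intro y hy
    obtain ⟨n, hn, hnk⟩ := Walk.mem_support_iff_exists_getVert.mp hy
    have hck : r * n - G.dist u (p.getVert n) < r := (F3 n hnk).2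
    refine ⟨⟨r * n - G.dist u (p.getVert n), by omega⟩, ?_⟩
    dsimp only
    rw [dif_pos (show ((⟨r * n - G.dist u (p.getVert n), by omega⟩ : Fin (2 * r - 1)) : ℕ) < r
      from hck)]
    exact hn ▸ hWc _ n hnk rfl
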